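/- With the protocol and function f from the previous context: the transitions 1c→2d and 2b→1d preserve f exactly, i.e., if C → C' by one of these transitions then f(C') = f(C). -/
import Mathlib


/-- A configuration of the doubling protocol on states `{1,2,3,4,a,b,c,d}`,
recorded as counts of agents in each state. -/
structure Conf where
  n1 : ℕ
  n2 : ℕ
  n3 : ℕ
  n4 : ℕ
  a : ℕ
  b : ℕ
  c : ℕ
  d : ℕ

/-- One step of the protocol with transitions
`1c→2d, 2b→1d, 1a→3b, 3d→4c, 4b→3c, 3a→1b` (all other interactions are no-ops,
which do not change the count vector). -/
def DStep (C C' : Conf) : Prop :=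
  (1 ≤ C.n1 ∧ 1 ≤ C.c ∧ C' = ⟨C.n1 - 1, C.n2 + 1, C.n3, C.n4, C.a, C.b, C.c - 1, C.d + 1⟩) ∨
  (1 ≤ C.n2 ∧ 1 ≤ C.b ∧ C' = ⟨C.n1 + 1, C.n2 - 1, C.n3, C.n4, C.a, C.b - 1, C.c, C.d + 1⟩) ∨
  (1 ≤ C.n1 ∧ 1 ≤ C.a ∧ C' = ⟨C.n1 - 1, C.n2, C.n3 + 1, C.n4, C.a - 1, C.b + 1, C.c, C.d⟩) ∨
  (1 ≤ C.n3 ∧ 1 ≤ C.d ∧ C' = ⟨C.n1, C.n2, C.n3 - 1, C.n4 + 1, C.a, C.b, C.c + 1, C.d - 1⟩) ∨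
  (1 ≤ C.n4 ∧ 1 ≤ C.b ∧ C' = ⟨C.n1, C.n2, C.n3 + 1, C.n4 - 1, C.a, C.b - 1, C.c + 1, C.d⟩) ∨
  (1 ≤ C.n3 ∧ 1 ≤ C.a ∧ C' = ⟨C.n1 + 1, C.n2, C.n3 - 1, C.n4, C.a - 1, C.b + 1, C.c, C.d⟩)

/-- `C` has exactly one agent in a numbered state. -/
def OneNumbered (C : Conf) : Prop :=
  C.n1 + C.n2 + C.n3 + C.n4 = 1

/-- The potential function `f` (meaningful when `C` has exactly one numbered agent). -/
def fPot (C : Conf) : ℕ :=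
  if C.n1 = 1 then 2 ^ C.a * (2 * C.c + C.d)
  else if C.n2 = 1 then 2 ^ C.a * (2 * C.c + C.d + 1)
  else if C.n3 = 1 then 2 ^ C.a * (2 * C.d + C.c)
  else 2 ^ C.a * (2 * C.d + C.c + 1)

/-- The transitions `1c→2d` and `2b→1d` preserve `f` exactly. -/
theorem fPot_preserved_1c_2b (C C' : Conf) (h1 : OneNumbered C)
    (h : (1 ≤ C.n1 ∧ 1 ≤ C.c ∧
            C' = ⟨C.n1 - 1, C.n2 + 1, C.n3, C.n4, C.a, C.b, C.c - 1, C.d + 1⟩) ∨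
         (1 ≤ C.n2 ∧ 1 ≤ C.b ∧
            C' = ⟨C.n1 + 1, C.n2 - 1, C.n3, C.n4, C.a, C.b - 1, C.c, C.d + 1⟩)) :
    fPot C' = fPot C := by
  unfold OneNumbered at h1
  obtain ⟨c1, c2, c3, c4, a, b, c, d⟩ := C
  rcases h with ⟨hn, hc, rfl⟩ | ⟨hn, hb, rfl⟩ <;> simp only at * <;> unfold fPot <;> simp only
  · have e1 : c1 = 1 := by omega
    have e2 : c2 = 0 := by omega
    subst e1; subst e2
    norm_num
    omega
  · have e2 : c2 = 1 := by omega
    have e1 : c1 = 0 := by omega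
    subst e1; subst e2
    norm_num
    omega
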